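/- Let σ1, σ2, ξ, c > 0 and let V : (0,∞)² → (0,∞) be homogeneous of order −1. Let (Z1, Z2) be a pair of positive random variables with joint cumulative distribution function exp(−V(z1, z2)) for z1, z2 > 0, whose margins are both unit Fréchet (P(Z_i ≤ z) = exp(−1/z) for z > 0). Set Y1 = σ1·Z1^{ξ}, Y2 = σ2·Z2^{ξ}, with marginal distribution functions F_i(x) = exp(−(x/σ_i)^{−1/ξ}) for x > 0, and put a12 = (c·σ1/σ2)^{−1/ξ}, a21 = 1/a12, θ_c = V(a12, a21). Then the RFA-madogram satisfies D(c, Y1, Y2) = θ_c/(θ_c + 1) − 1/(2·(1 + a12)) − 1/(2·(1 + a21)). -/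

import Mathlib

open MeasureTheory Set

lemma key_layercake {Ω : Type*} [MeasurableSpace Ω] (μ : Measure Ω) [IsProbabilityMeasure μ]
    (X : Ω → ℝ) (hX : Measurable X) (h0 : ∀ ω, 0 ≤ X ω) (h1 : ∀ ω, X ω < 1)
    (β : ℝ) (hβ : 0 < β)
    (hcdf : ∀ u : ℝ, 0 < u → u < 1 → (μ {ω | X ω ≤ u}).toReal = u ^ β) :
    ∫ ω, X ω ∂μ = β / (β + 1) := by
  have hint : Integrable X μ := by
    refine (integrable_const (1 : ℝ)).mono' hX.aestronglyMeasurable ?_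
    exact Filter.Eventually.of_forall fun ω => by
      rw [Real.norm_eq_abs, abs_of_nonneg (h0 ω)]; exact (h1 ω).le
  rw [hint.integral_eq_integral_meas_lt (Filter.Eventually.of_forall h0)]
  simp only [measureReal_def]
  have hzero : ∀ t ∈ Ioi (0:ℝ) \ Ioo 0 1, (μ {a | t < X a}).toReal = 0 := by
    intro t ht
    have h1t : 1 ≤ t := by
      rcases ht with ⟨ht1, ht2⟩
      by_contra h
      exact ht2 ⟨ht1, lt_of_not_ge h⟩
    have : {a | t < X a} = ∅ := by
      ext a; simp only [mem_setOf_eq, mem_empty_iff_false, iff_false, not_lt]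
      exact le_trans (h1 a).le h1t
    simp [this]
  rw [setIntegral_eq_of_subset_of_ae_diff_eq_zero measurableSet_Ioi.nullMeasurableSet
      Ioo_subset_Ioi_self (Filter.Eventually.of_forall hzero)]
  have hcongr : ∫ t in Ioo (0:ℝ) 1, (μ {a | t < X a}).toReal
      = ∫ t in Ioo (0:ℝ) 1, (1 - t ^ β) := by
    refine setIntegral_congr_fun measurableSet_Ioo fun t ht => ?_
    have hms : MeasurableSet {a | X a ≤ t} := hX measurableSet_Iic
    have hc : {a | t < X a} = {a | X a ≤ t}ᶜ := by ext a; simp [not_le]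
    rw [hc, measure_compl hms (measure_ne_top μ _),
      ENNReal.toReal_sub_of_le (measure_mono (subset_univ _)) (measure_ne_top μ _)]
    simp [hcdf t ht.1 ht.2]
  rw [hcongr, ← integral_Ioc_eq_integral_Ioo, ← intervalIntegral.integral_of_le zero_le_one]
  have hrpow : IntervalIntegrable (fun t : ℝ => t ^ β) volume 0 1 :=
    intervalIntegral.intervalIntegrable_rpow (Or.inl hβ.le)
  rw [intervalIntegral.integral_sub intervalIntegrable_const hrpow,
    intervalIntegral.integral_const, integral_rpow (Or.inl (by linarith))]
  rw [Real.one_rpow, Real.zero_rpow (by linarith)]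
  have : (0:ℝ) < β + 1 := by linarith
  field_simp
  simp

lemma set_exp_le {Ω : Type*} (Z : Ω → ℝ) (hZpos : ∀ ω, 0 < Z ω) (b u : ℝ)
    (hu0 : 0 < u) (hu1 : u < 1) :
    {ω | Real.exp (-(b * (Z ω)⁻¹)) ≤ u} = {ω | Z ω ≤ b / (-Real.log u)} := by
  have hL : 0 < -Real.log u := neg_pos.mpr (Real.log_neg hu0 hu1)
  ext ω
  have hz := hZpos ω
  simp only [mem_setOf_eq]
  rw [← Real.le_log_iff_exp_le hu0, neg_le, ← div_eq_mul_inv,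
    le_div_iff₀ hz, le_div_iff₀ hL, mul_comm]

/-- In the homogeneous bivariate GEV case, with `V` homogeneous of order
`−1`, unit Fréchet margins for `(Z1, Z2)`, `Y_i = σ_i·Z_i^{ξ}`, `a12 = (c·σ1/σ2)^{−1/ξ}`,
`a21 = 1/a12` and `θ_c = V(a12, a21)`, the RFA-madogram equals
`D(c, Y1, Y2) = θ_c/(θ_c + 1) − 1/(2(1 + a12)) − 1/(2(1 + a21))`. -/
theorem rfa_madogram_formula_homogeneous_GEV
    {Ω : Type*} [MeasurableSpace Ω] (μ : Measure Ω) [IsProbabilityMeasure μ]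
    (σ1 σ2 ξ c : ℝ) (hσ1 : 0 < σ1) (hσ2 : 0 < σ2) (hξ : 0 < ξ) (hc : 0 < c)
    (V : ℝ → ℝ → ℝ) (hVpos : ∀ z1 > (0 : ℝ), ∀ z2 > (0 : ℝ), 0 < V z1 z2)
    (hVhom : ∀ t > (0 : ℝ), ∀ z1 > (0 : ℝ), ∀ z2 > (0 : ℝ),
      V (t * z1) (t * z2) = t⁻¹ * V z1 z2)
    (Z1 Z2 : Ω → ℝ) (hZ1meas : Measurable Z1) (hZ2meas : Measurable Z2)
    (hZ1pos : ∀ ω, 0 < Z1 ω) (hZ2pos : ∀ ω, 0 < Z2 ω)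
    (hjoint : ∀ z1 > (0 : ℝ), ∀ z2 > (0 : ℝ),
      (μ {ω | Z1 ω ≤ z1 ∧ Z2 ω ≤ z2}).toReal = Real.exp (-V z1 z2))
    (hZ1cdf : ∀ z > (0 : ℝ), (μ {ω | Z1 ω ≤ z}).toReal = Real.exp (-1 / z))
    (hZ2cdf : ∀ z > (0 : ℝ), (μ {ω | Z2 ω ≤ z}).toReal = Real.exp (-1 / z))
    (F1 F2 : ℝ → ℝ)
    (hF1 : ∀ x > (0 : ℝ), F1 x = Real.exp (-(x / σ1) ^ (-(1 / ξ))))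
    (hF2 : ∀ x > (0 : ℝ), F2 x = Real.exp (-(x / σ2) ^ (-(1 / ξ)))) :
    (1 / 2) * ∫ ω, |F2 (c * (σ1 * Z1 ω ^ ξ)) - F1 ((σ2 * Z2 ω ^ ξ) / c)| ∂μ
      = V ((c * σ1 / σ2) ^ (-(1 / ξ))) (((c * σ1 / σ2) ^ (-(1 / ξ)))⁻¹)
          / (V ((c * σ1 / σ2) ^ (-(1 / ξ))) (((c * σ1 / σ2) ^ (-(1 / ξ)))⁻¹) + 1)
        - 1 / (2 * (1 + (c * σ1 / σ2) ^ (-(1 / ξ))))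
        - 1 / (2 * (1 + ((c * σ1 / σ2) ^ (-(1 / ξ)))⁻¹)) := by
  set a : ℝ := (c * σ1 / σ2) ^ (-(1 / ξ)) with ha_def
  have hbase : 0 < c * σ1 / σ2 := by positivity
  have ha : 0 < a := Real.rpow_pos_of_pos hbase _
  have ha' : 0 < a⁻¹ := inv_pos.mpr ha
  set θ : ℝ := V a a⁻¹ with hθ_def
  have hθ : 0 < θ := hVpos a ha a⁻¹ ha'
  set W1 : Ω → ℝ := fun ω => Real.exp (-(a * (Z1 ω)⁻¹)) with hW1_def
  set W2 : Ω → ℝ := fun ω => Real.exp (-(a⁻¹ * (Z2 ω)⁻¹)) with hW2_def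
  -- pointwise identification of the integrand
  have hpt : ∀ ω, |F2 (c * (σ1 * Z1 ω ^ ξ)) - F1 ((σ2 * Z2 ω ^ ξ) / c)|
      = |W1 ω - W2 ω| := by
    intro ω
    have hz1 := hZ1pos ω
    have hz2 := hZ2pos ω
    have hz1p : 0 < Z1 ω ^ ξ := Real.rpow_pos_of_pos hz1 _
    have hz2p : 0 < Z2 ω ^ ξ := Real.rpow_pos_of_pos hz2 _
    have hexp : ξ * -(1 / ξ) = -1 := by field_simp
    have e1 : F2 (c * (σ1 * Z1 ω ^ ξ)) = W1 ω := by
      rw [hF2 _ (by positivity)]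
      simp only [hW1_def]
      congr 1
      rw [show c * (σ1 * Z1 ω ^ ξ) / σ2 = (c * σ1 / σ2) * Z1 ω ^ ξ by ring,
        Real.mul_rpow hbase.le hz1p.le, ← Real.rpow_mul hz1.le, hexp,
        Real.rpow_neg_one]
    have e2 : F1 ((σ2 * Z2 ω ^ ξ) / c) = W2 ω := by
      rw [hF1 _ (by positivity)]
      simp only [hW2_def]
      congr 1
      rw [show σ2 * Z2 ω ^ ξ / c / σ1 = (c * σ1 / σ2)⁻¹ * Z2 ω ^ ξ by
          field_simp
          try ring,
        Real.mul_rpow (by positivity) hz2p.le, Real.inv_rpow hbase.le,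
        ← Real.rpow_mul hz2.le, hexp, Real.rpow_neg_one]
    rw [e1, e2]
  -- measurability and bounds
  have hW1m : Measurable W1 := (((hZ1meas.inv).const_mul a).neg).exp
  have hW2m : Measurable W2 := (((hZ2meas.inv).const_mul a⁻¹).neg).exp
  have hW1pos : ∀ ω, 0 ≤ W1 ω := fun ω => (Real.exp_pos _).le
  have hW2pos : ∀ ω, 0 ≤ W2 ω := fun ω => (Real.exp_pos _).le
  have hW1lt : ∀ ω, W1 ω < 1 := fun ω => by
    have hz := hZ1pos ω
    exact Real.exp_lt_one_iff.mpr (neg_lt_zero.mpr (by positivity))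
  have hW2lt : ∀ ω, W2 ω < 1 := fun ω => by
    have hz := hZ2pos ω
    exact Real.exp_lt_one_iff.mpr (neg_lt_zero.mpr (by positivity))
  -- expectations via the layer-cake lemma
  have EW1 : ∫ ω, W1 ω ∂μ = a⁻¹ / (a⁻¹ + 1) := by
    refine key_layercake μ W1 hW1m hW1pos hW1lt a⁻¹ ha' fun u hu0 hu1 => ?_
    have hL : 0 < -Real.log u := neg_pos.mpr (Real.log_neg hu0 hu1)
    have hset : {ω | W1 ω ≤ u} = {ω | Z1 ω ≤ a / (-Real.log u)} :=
      set_exp_le Z1 hZ1pos a u hu0 hu1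
    rw [hset, hZ1cdf _ (by positivity), Real.rpow_def_of_pos hu0]
    congr 1
    field_simp
    try ring
  have EW2 : ∫ ω, W2 ω ∂μ = a / (a + 1) := by
    have := key_layercake μ W2 hW2m hW2pos hW2lt (a⁻¹)⁻¹ (inv_pos.mpr ha')
      (fun u hu0 hu1 => ?_)
    · rwa [inv_inv] at this
    have hL : 0 < -Real.log u := neg_pos.mpr (Real.log_neg hu0 hu1)
    have hset : {ω | W2 ω ≤ u} = {ω | Z2 ω ≤ a⁻¹ / (-Real.log u)} :=
      set_exp_le Z2 hZ2pos a⁻¹ u hu0 hu1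
    rw [hset, hZ2cdf _ (by positivity), Real.rpow_def_of_pos hu0]
    congr 1
    rw [inv_inv]
    field_simp
  have EM : ∫ ω, max (W1 ω) (W2 ω) ∂μ = θ / (θ + 1) := by
    refine key_layercake μ (fun ω => max (W1 ω) (W2 ω)) (hW1m.max hW2m)
      (fun ω => le_trans (hW1pos ω) (le_max_left _ _))
      (fun ω => max_lt (hW1lt ω) (hW2lt ω)) θ hθ fun u hu0 hu1 => ?_
    have hL : 0 < -Real.log u := neg_pos.mpr (Real.log_neg hu0 hu1)
    have hL' : 0 < (-Real.log u)⁻¹ := inv_pos.mpr hL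
    have hs1 := set_exp_le Z1 hZ1pos a u hu0 hu1
    have hs2 := set_exp_le Z2 hZ2pos a⁻¹ u hu0 hu1
    have hset : {ω | max (W1 ω) (W2 ω) ≤ u}
        = {ω | Z1 ω ≤ a / (-Real.log u) ∧ Z2 ω ≤ a⁻¹ / (-Real.log u)} := by
      ext ω
      simp only [mem_setOf_eq, max_le_iff]
      constructor
      · rintro ⟨h1, h2⟩
        exact ⟨(Set.ext_iff.mp hs1 ω).mp h1, (Set.ext_iff.mp hs2 ω).mp h2⟩
      · rintro ⟨h1, h2⟩
        exact ⟨(Set.ext_iff.mp hs1 ω).mpr h1, (Set.ext_iff.mp hs2 ω).mpr h2⟩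
    rw [hset, hjoint _ (by positivity) _ (by positivity), Real.rpow_def_of_pos hu0]
    congr 1
    have h1 : a / (-Real.log u) = (-Real.log u)⁻¹ * a := by ring
    have h2 : a⁻¹ / (-Real.log u) = (-Real.log u)⁻¹ * a⁻¹ := by ring
    rw [h1, h2, hVhom _ hL' _ ha _ ha', inv_inv, ← hθ_def]
    ring
  -- integrability
  have hInt : ∀ (X : Ω → ℝ), Measurable X → (∀ ω, 0 ≤ X ω) → (∀ ω, X ω < 1)
      → Integrable X μ := by
    intro X hX h0 h1
    refine (integrable_const (1 : ℝ)).mono' hX.aestronglyMeasurable ?_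
    exact Filter.Eventually.of_forall fun ω => by
      rw [Real.norm_eq_abs, abs_of_nonneg (h0 ω)]; exact (h1 ω).le
  have hiW1 : Integrable W1 μ := hInt W1 hW1m hW1pos hW1lt
  have hiW2 : Integrable W2 μ := hInt W2 hW2m hW2pos hW2lt
  have hiM : Integrable (fun ω => max (W1 ω) (W2 ω)) μ :=
    hInt _ (hW1m.max hW2m) (fun ω => le_trans (hW1pos ω) (le_max_left _ _))
      (fun ω => max_lt (hW1lt ω) (hW2lt ω))
  -- assemble
  have habs : ∀ ω, |W1 ω - W2 ω| = 2 * max (W1 ω) (W2 ω) - W1 ω - W2 ω := by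
    intro ω
    rcases le_total (W1 ω) (W2 ω) with h | h
    · rw [abs_of_nonpos (by linarith), max_eq_right h]; ring
    · rw [abs_of_nonneg (by linarith), max_eq_left h]; ring
  have hI : ∫ ω, |F2 (c * (σ1 * Z1 ω ^ ξ)) - F1 ((σ2 * Z2 ω ^ ξ) / c)| ∂μ
      = 2 * (θ / (θ + 1)) - a⁻¹ / (a⁻¹ + 1) - a / (a + 1) := by
    have : ∀ ω, |F2 (c * (σ1 * Z1 ω ^ ξ)) - F1 ((σ2 * Z2 ω ^ ξ) / c)|
        = 2 * max (W1 ω) (W2 ω) - W1 ω - W2 ω := fun ω => by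
      rw [hpt ω, habs ω]
    have hi2M : Integrable (fun ω => 2 * max (W1 ω) (W2 ω)) μ := hiM.const_mul 2
    have hiA : Integrable (fun ω => 2 * max (W1 ω) (W2 ω) - W1 ω) μ := hi2M.sub hiW1
    rw [integral_congr_ae (Filter.Eventually.of_forall this),
      integral_sub hiA hiW2, integral_sub hi2M hiW1, integral_const_mul, EM, EW1, EW2]
  rw [hI]
  have h1 : (0:ℝ) < θ + 1 := by linarith
  have h2 : (0:ℝ) < a + 1 := by linarith
  have h3 : (0:ℝ) < a⁻¹ + 1 := by linarith
  have h4 : (0:ℝ) < 1 + a := by linarith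
  have h5 : (0:ℝ) < 1 + a⁻¹ := by linarith
  field_simp
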